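/- Let τ : ℝ² → 𝕊 be continuously differentiable and let σ ∈ X_T have the same degrees of freedom as τ, that is: (i) ∫₀¹ (n_iᵀ σ(γ_i(s)) n_i)·q(s) ds = ∫₀¹ (n_iᵀ τ(γ_i(s)) n_i)·q(s) ds for every affine q : ℝ → ℝ and every i ∈ {1,2,3}; (ii) ∫_T σ(x) dx = ∫_T τ(x) dx (entrywise Lebesgue integrals over the triangle T); and (iii) ∫_T (div σ)(x)·v(x) dx = ∫_T (div τ)(x)·v(x) dx for every affine v : ℝ² → ℝ². Then σ conserves the linear moments of the normal traces on the boundary: for every affine map v : ℝ² → ℝ², Σ_{i=1}^{3} ∫_{e_i} (σ n_i)·v ds = Σ_{i=1}^{3} ∫_{e_i} (τ n_i)·v ds. -/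

import Mathlib

open MeasureTheory Matrix

noncomputable section

/-- `γ_i(s) = (1-s)·x_{i+1} + s·x_{i+2}`, parametrization of edge `e_i`. -/
def edgePt (x : Fin 3 → Fin 2 → ℝ) (i : Fin 3) (s : ℝ) : Fin 2 → ℝ :=
  (1 - s) • x (i + 1) + s • x (i + 2)

/-- `n i` is the outward unit normal on the edge `e_i = [x_{i+1}, x_{i+2}]`. -/
def IsOuterNormal (x n : Fin 3 → Fin 2 → ℝ) : Prop :=
  ∀ i : Fin 3, n i ⬝ᵥ n i = 1 ∧ n i ⬝ᵥ (x (i + 2) - x (i + 1)) = 0 ∧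
    0 < n i ⬝ᵥ (x (i + 1) - x i)

/-- A real-valued function on the plane given by a polynomial of total degree at most 2. -/
def IsPolyDeg2 (f : (Fin 2 → ℝ) → ℝ) : Prop :=
  ∃ p : MvPolynomial (Fin 2) ℝ, p.totalDegree ≤ 2 ∧ ∀ y, f y = MvPolynomial.eval y p

/-- Membership in the local space `X_T`. -/
def MemXT (x n : Fin 3 → Fin 2 → ℝ)
    (τ : (Fin 2 → ℝ) → Matrix (Fin 2) (Fin 2) ℝ) : Prop :=
  (∀ y, (τ y)ᵀ = τ y) ∧
  (∀ k l : Fin 2, IsPolyDeg2 fun y => τ y k l) ∧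
  (∀ i : Fin 3, ∃ a b : ℝ, ∀ s : ℝ,
    n i ⬝ᵥ (τ (edgePt x i s)).mulVec (n i) = a * s + b)

/-- Row-wise divergence of a matrix field: `(div τ)_k = ∂₁ τ_{k1} + ∂₂ τ_{k2}`. -/
def matDiv (τ : (Fin 2 → ℝ) → Matrix (Fin 2) (Fin 2) ℝ) (y : Fin 2 → ℝ) : Fin 2 → ℝ :=
  fun k => ∑ j : Fin 2, fderiv ℝ (fun z => τ z k j) y (Pi.single j 1)

/-- The closed triangle `T = conv{x 0, x 1, x 2}`. -/
def Tset (x : Fin 3 → Fin 2 → ℝ) : Set (Fin 2 → ℝ) :=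
  convexHull ℝ {x 0, x 1, x 2}

/-- Euclidean length of a vector in `ℝ²` (used for edge lengths). -/
def enorm2 (v : Fin 2 → ℝ) : ℝ := Real.sqrt (v ⬝ᵥ v)

namespace AW

/-- Reference triangle in `ℝ × ℝ`. -/
def Sp : Set (ℝ × ℝ) := {p | 0 ≤ p.1 ∧ 0 ≤ p.2 ∧ p.1 + p.2 ≤ 1}

lemma isClosed_Sp : IsClosed Sp := by
  have h1 : IsClosed {p : ℝ × ℝ | 0 ≤ p.1} := isClosed_le continuous_const continuous_fst
  have h2 : IsClosed {p : ℝ × ℝ | 0 ≤ p.2} := isClosed_le continuous_const continuous_snd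
  have h3 : IsClosed {p : ℝ × ℝ | p.1 + p.2 ≤ 1} :=
    isClosed_le (continuous_fst.add continuous_snd) continuous_const
  exact (h1.inter (h2.inter h3))

lemma measurableSet_Sp : MeasurableSet Sp := isClosed_Sp.measurableSet

lemma isCompact_Sp : IsCompact Sp := by
  refine IsCompact.of_isClosed_subset (isCompact_Icc (a := ((0:ℝ),(0:ℝ))) (b := (1,1)))
    isClosed_Sp ?_
  rintro ⟨a, b⟩ ⟨h1, h2, h3⟩
  constructor <;> constructor <;> simp_all <;> linarith

/-- Fundamental theorem of calculus over the reference triangle, second variable. -/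
lemma refFTC2 (g F : ℝ × ℝ → ℝ) (hg : Continuous g) (hF : Continuous F)
    (hd : ∀ p : ℝ × ℝ, HasDerivAt (fun t => g (p.1, t)) (F p) p.2) :
    ∫ p in Sp, F p = (∫ s in (0:ℝ)..1, g (s, 1 - s)) - ∫ s in (0:ℝ)..1, g (s, 0) := by
  have hInt : Integrable (Sp.indicator F) := by
    rw [integrable_indicator_iff measurableSet_Sp]
    exact hF.continuousOn.integrableOn_compact isCompact_Sp
  have key : ∀ s : ℝ, (∫ t, Sp.indicator F (s, t)) =
      (Set.Icc (0:ℝ) 1).indicator (fun s => g (s, 1 - s) - g (s, 0)) s := by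
    intro s
    by_cases hs : s ∈ Set.Icc (0:ℝ) 1
    · obtain ⟨hs0, hs1⟩ := hs
      have hslice : ∀ t, Sp.indicator F (s, t) =
          (Set.Icc (0:ℝ) (1 - s)).indicator (fun t => F (s, t)) t := by
        intro t
        by_cases ht : t ∈ Set.Icc (0:ℝ) (1 - s)
        · obtain ⟨ht0, ht1⟩ := ht
          rw [Set.indicator_of_mem (show (s, t) ∈ Sp from ⟨hs0, ht0, by linarith⟩) F,
            Set.indicator_of_mem (show t ∈ Set.Icc (0:ℝ) (1-s) from ⟨ht0, ht1⟩)]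
        · rw [Set.indicator_of_notMem ht, Set.indicator_of_notMem]
          rintro ⟨-, h2, h3⟩
          exact ht ⟨h2, by linarith⟩
      rw [Set.indicator_of_mem (show s ∈ Set.Icc (0:ℝ) 1 from ⟨hs0, hs1⟩)]
      simp only [hslice]
      rw [MeasureTheory.integral_indicator measurableSet_Icc,
        MeasureTheory.integral_Icc_eq_integral_Ioc,
        ← intervalIntegral.integral_of_le (by linarith : (0:ℝ) ≤ 1 - s)]
      exact intervalIntegral.integral_eq_sub_of_hasDerivAt
        (f := fun t => g (s, t)) (f' := fun t => F (s, t)) (fun t _ => hd (s, t))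
        ((hF.comp ((continuous_const (y := s)).prodMk continuous_id)).intervalIntegrable _ _)
    · have hempty : ∀ t, (s, t) ∉ Sp := by
        rintro t ⟨h1, h2, h3⟩
        simp only [Set.mem_Icc, not_and_or, not_le] at hs
        rcases hs with h | h
        · linarith
        · linarith
      rw [Set.indicator_of_notMem hs]
      have : ∀ t, Sp.indicator F (s, t) = 0 := fun t =>
        Set.indicator_of_notMem (hempty t) F
      simp only [this, MeasureTheory.integral_zero]
  rw [← MeasureTheory.integral_indicator measurableSet_Sp, Measure.volume_eq_prod,
    MeasureTheory.integral_prod _ (by rwa [← Measure.volume_eq_prod])]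
  simp only [key]
  rw [MeasureTheory.integral_indicator measurableSet_Icc,
    MeasureTheory.integral_Icc_eq_integral_Ioc,
    ← intervalIntegral.integral_of_le (by norm_num : (0:ℝ) ≤ 1)]
  exact intervalIntegral.integral_sub
    ((hg.comp (continuous_id.prodMk (continuous_const.sub continuous_id))).intervalIntegrable _ _)
    ((hg.comp (continuous_id.prodMk continuous_const)).intervalIntegrable _ _)

lemma swap_preimage_Sp : Prod.swap ⁻¹' Sp = Sp := by
  ext ⟨a, b⟩
  simp only [Set.mem_preimage, Prod.swap_prod_mk, Sp, Set.mem_setOf_eq]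
  constructor <;> rintro ⟨h1, h2, h3⟩ <;> exact ⟨h2, h1, by linarith⟩

/-- Fundamental theorem of calculus over the reference triangle, first variable. -/
lemma refFTC1 (g F : ℝ × ℝ → ℝ) (hg : Continuous g) (hF : Continuous F)
    (hd : ∀ p : ℝ × ℝ, HasDerivAt (fun s => g (s, p.2)) (F p) p.1) :
    ∫ p in Sp, F p = (∫ s in (0:ℝ)..1, g (1 - s, s)) - ∫ s in (0:ℝ)..1, g (0, s) := by
  have h := refFTC2 (fun p => g (p.2, p.1)) (fun p => F (p.2, p.1))
    (hg.comp (continuous_snd.prodMk continuous_fst))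
    (hF.comp (continuous_snd.prodMk continuous_fst))
    (fun p => hd (p.2, p.1))
  have hswap : ∫ p in Sp, F (p.2, p.1) = ∫ p in Sp, F p := by
    have hmp : MeasurePreserving (Prod.swap : ℝ × ℝ → ℝ × ℝ) volume volume := by
      rw [Measure.volume_eq_prod]
      exact Measure.measurePreserving_swap
    have := hmp.setIntegral_preimage_emb
      (MeasurableEquiv.prodComm : ℝ × ℝ ≃ᵐ ℝ × ℝ).measurableEmbedding F Sp
    rw [swap_preimage_Sp] at this
    exact this
  rw [← hswap, h]


lemma convex_Sp : Convex ℝ Sp := by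
  intro p hp q hq a b ha hb hab
  obtain ⟨p1, p2, p3⟩ := hp
  obtain ⟨q1, q2, q3⟩ := hq
  refine ⟨?_, ?_, ?_⟩ <;> simp only [Prod.fst_add, Prod.snd_add, Prod.smul_fst, Prod.smul_snd,
    smul_eq_mul] <;> nlinarith

lemma hull_eq_Sp : convexHull ℝ {((0:ℝ),(0:ℝ)), (1,0), (0,1)} = Sp := by
  apply le_antisymm
  · apply convexHull_min _ convex_Sp
    rintro p (rfl | rfl | rfl) <;> exact ⟨by norm_num, by norm_num, by norm_num⟩
  · intro p hp
    obtain ⟨hp1, hp2, hp3⟩ := hp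
    rw [show ({((0:ℝ),(0:ℝ)), (1,0), (0,1)} : Set (ℝ × ℝ)) = insert ((0:ℝ),(0:ℝ)) {(1,0),(0,1)} from rfl,
      convexHull_insert ⟨(1,0), by simp⟩, convexHull_pair]
    set c := p.1 + p.2 with hc
    rw [mem_convexJoin]
    rcases eq_or_ne c 0 with h0 | h0
    · have hp10 : p.1 = 0 := by linarith
      have hp20 : p.2 = 0 := by linarith
      have hp' : p = ((0:ℝ),(0:ℝ)) := Prod.ext hp10 hp20
      refine ⟨((0:ℝ),(0:ℝ)), rfl, (1,0), left_mem_segment ℝ _ _, ?_⟩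
      rw [hp']
      exact left_mem_segment ℝ _ _
    · have hcpos : 0 < c := lt_of_le_of_ne (by positivity) (Ne.symm h0)
      refine ⟨((0:ℝ),(0:ℝ)), rfl, (p.1 / c, p.2 / c), ?_, ?_⟩
      · exact ⟨p.1 / c, p.2 / c, div_nonneg hp1 hcpos.le, div_nonneg hp2 hcpos.le,
          by field_simp; linarith, by simp [Prod.ext_iff]⟩
      · refine ⟨1 - c, c, by linarith, hcpos.le, by ring, ?_⟩
        simp only [Prod.ext_iff, Prod.fst_add, Prod.snd_add, Prod.smul_fst, Prod.smul_snd,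
          smul_eq_mul]
        constructor <;> field_simp <;> simp


/-- Determinant of the edge-vector matrix. -/
def Ddet (x : Fin 3 → Fin 2 → ℝ) : ℝ :=
  (x 1 0 - x 0 0) * (x 2 1 - x 0 1) - (x 1 1 - x 0 1) * (x 2 0 - x 0 0)

/-- Affine parametrization of the triangle by the reference triangle. -/
def Phi (x : Fin 3 → Fin 2 → ℝ) (p : ℝ × ℝ) : Fin 2 → ℝ :=
  x 0 + p.1 • (x 1 - x 0) + p.2 • (x 2 - x 0)

/-- Linear part of `Phi`, as a linear map on `Fin 2 → ℝ`. -/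
def Lmap (x : Fin 3 → Fin 2 → ℝ) : (Fin 2 → ℝ) →ₗ[ℝ] (Fin 2 → ℝ) :=
  (LinearMap.proj 0 : (Fin 2 → ℝ) →ₗ[ℝ] ℝ).smulRight (x 1 - x 0) +
  (LinearMap.proj 1 : (Fin 2 → ℝ) →ₗ[ℝ] ℝ).smulRight (x 2 - x 0)

lemma Lmap_apply (x : Fin 3 → Fin 2 → ℝ) (z : Fin 2 → ℝ) :
    Lmap x z = z 0 • (x 1 - x 0) + z 1 • (x 2 - x 0) := rfl

lemma lin_indep_d (x : Fin 3 → Fin 2 → ℝ) (hx : AffineIndependent ℝ x) :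
    ∀ s t : ℝ, s • (x 1 - x 0) + t • (x 2 - x 0) = 0 → s = 0 ∧ t = 0 := by
  intro s t hst
  have := affineIndependent_iff.mp hx Finset.univ ![-(s + t), s, t]
  have hsum : (Finset.univ.sum ![-(s + t), s, t]) = 0 := by
    simp [Fin.sum_univ_three]
  have hcomb : ∑ e : Fin 3, (![-(s + t), s, t]) e • x e = 0 := by
    simp only [Fin.sum_univ_three, Matrix.cons_val_zero, Matrix.cons_val_one, Matrix.head_cons,
      Matrix.cons_val_two, Matrix.tail_cons]
    have : s • (x 1 - x 0) + t • (x 2 - x 0) =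
        (-(s + t)) • x 0 + s • x 1 + t • x 2 := by
      simp only [smul_sub, neg_add, add_smul, neg_smul]
      abel
    rw [← this, hst]
  have h1 := this hsum hcomb 1 (Finset.mem_univ _)
  have h2 := this hsum hcomb 2 (Finset.mem_univ _)
  simp at h1 h2
  exact ⟨h1, h2⟩

lemma Ddet_ne_zero (x : Fin 3 → Fin 2 → ℝ) (hx : AffineIndependent ℝ x) : Ddet x ≠ 0 := by
  intro hD
  have li := lin_indep_d x hx
  have hzero : ∀ s t : ℝ, s * (x 1 0 - x 0 0) + t * (x 2 0 - x 0 0) = 0 →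
      s * (x 1 1 - x 0 1) + t * (x 2 1 - x 0 1) = 0 → s = 0 ∧ t = 0 := by
    intro s t h0 h1
    refine li s t ?_
    funext i
    fin_cases i <;>
      simpa only [Pi.add_apply, Pi.smul_apply, Pi.sub_apply, Pi.zero_apply, smul_eq_mul]
  unfold Ddet at hD
  have h1 := hzero (x 2 1 - x 0 1) (-(x 1 1 - x 0 1)) (by ring_nf; ring_nf at hD; linarith)
    (by ring)
  have h2 := hzero (x 2 0 - x 0 0) (-(x 1 0 - x 0 0)) (by ring)
    (by ring_nf; ring_nf at hD; linarith)
  obtain ⟨h1a, h1b⟩ := h1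
  obtain ⟨h2a, h2b⟩ := h2
  have h1b' : x 1 1 - x 0 1 = 0 := by linarith [neg_eq_zero.mp h1b]
  have h2b' : x 1 0 - x 0 0 = 0 := by linarith [neg_eq_zero.mp h2b]
  have := (li 1 0 (by
    funext i
    fin_cases i <;>
      simp only [Pi.add_apply, Pi.smul_apply, Pi.sub_apply, Pi.zero_apply, smul_eq_mul,
        one_mul, zero_mul, add_zero] <;> [exact h2b'; exact h1b'])).1
  norm_num at this

/-- Reference triangle as a subset of `Fin 2 → ℝ`. -/
def SE : Set (Fin 2 → ℝ) := {z | 0 ≤ z 0 ∧ 0 ≤ z 1 ∧ z 0 + z 1 ≤ 1}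

lemma measurableSet_SE : MeasurableSet SE := by
  have h1 : IsClosed {z : Fin 2 → ℝ | 0 ≤ z 0} := isClosed_le continuous_const (continuous_apply 0)
  have h2 : IsClosed {z : Fin 2 → ℝ | 0 ≤ z 1} := isClosed_le continuous_const (continuous_apply 1)
  have h3 : IsClosed {z : Fin 2 → ℝ | z 0 + z 1 ≤ 1} :=
    isClosed_le ((continuous_apply 0).add (continuous_apply 1)) continuous_const
  exact (h1.inter (h2.inter h3)).measurableSet

lemma det_Lmap (x : Fin 3 → Fin 2 → ℝ) : LinearMap.det (Lmap x) = Ddet x := by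
  rw [← LinearMap.det_toMatrix (Pi.basisFun ℝ (Fin 2))]
  rw [Matrix.det_fin_two]
  simp only [LinearMap.toMatrix_apply, Pi.basisFun_apply, Pi.basisFun_repr, Lmap_apply]
  simp [Pi.single_apply, Ddet]
  ring

lemma injOn_Phi (x : Fin 3 → Fin 2 → ℝ) (hD : Ddet x ≠ 0) :
    Function.Injective (fun z : Fin 2 → ℝ => x 0 + Lmap x z) := by
  intro z w h
  simp only [add_right_injective] at h
  have h' : Lmap x z = Lmap x w := by
    have := congrArg (fun v => v - x 0) h
    simpa using this
  have hdiff : (z 0 - w 0) • (x 1 - x 0) + (z 1 - w 1) • (x 2 - x 0) = 0 := by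
    have : Lmap x z - Lmap x w = 0 := by rw [h']; simp
    rw [Lmap_apply, Lmap_apply] at this
    rw [← this]
    module
  have e0 := congrFun hdiff 0
  have e1 := congrFun hdiff 1
  simp only [Pi.add_apply, Pi.smul_apply, Pi.sub_apply, Pi.zero_apply, smul_eq_mul] at e0 e1
  have hz0 : (z 0 - w 0) * Ddet x = 0 := by
    unfold Ddet; linear_combination (x 2 1 - x 0 1) * e0 - (x 2 0 - x 0 0) * e1
  have hz1 : (z 1 - w 1) * Ddet x = 0 := by
    unfold Ddet; linear_combination (x 1 0 - x 0 0) * e1 - (x 1 1 - x 0 1) * e0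
  have hz0' : z 0 = w 0 := by
    rcases mul_eq_zero.mp hz0 with h | h
    · linarith
    · exact absurd h hD
  have hz1' : z 1 = w 1 := by
    rcases mul_eq_zero.mp hz1 with h | h
    · linarith
    · exact absurd h hD
  funext i
  fin_cases i <;> assumption

lemma Phi_eq (x : Fin 3 → Fin 2 → ℝ) (z : Fin 2 → ℝ) :
    x 0 + Lmap x z = Phi x (z 0, z 1) := by
  simp [Phi, Lmap_apply, add_assoc]

/-- The image of the reference triangle under the affine parametrization is `T`. -/
lemma image_Phi (x : Fin 3 → Fin 2 → ℝ) :
    (fun z : Fin 2 → ℝ => x 0 + Lmap x z) '' SE = Tset x := by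
  classical
  have hSE : SE = convexHull ℝ {![(0:ℝ),0], ![1,0], ![0,1]} := by
    have h1 : SE = (MeasurableEquiv.finTwoArrow : (Fin 2 → ℝ) ≃ᵐ ℝ × ℝ) ⁻¹' Sp := rfl
    set e := (MeasurableEquiv.finTwoArrow : (Fin 2 → ℝ) ≃ᵐ ℝ × ℝ) with he
    set G := (((ContinuousLinearEquiv.finTwoArrow ℝ ℝ).symm.toLinearEquiv.toLinearMap).toAffineMap :
      (ℝ × ℝ) →ᵃ[ℝ] (Fin 2 → ℝ)) with hG
    have haff : (⇑e.symm : ℝ × ℝ → (Fin 2 → ℝ)) = ⇑G := by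
      funext p; funext i; fin_cases i <;> rfl
    have h3 : (⇑e.symm) '' Sp = SE := by
      rw [h1]
      exact congrFun (Set.image_eq_preimage_of_inverse (fun z => e.apply_symm_apply z)
        (fun z => e.symm_apply_apply z)) Sp
    rw [← h3, ← hull_eq_Sp, haff, AffineMap.image_convexHull]
    congr 1
    rw [show ({((0:ℝ),(0:ℝ)), (1,0), (0,1)} : Set (ℝ × ℝ)) =
      insert ((0:ℝ),(0:ℝ)) (insert ((1:ℝ),(0:ℝ)) {((0:ℝ),(1:ℝ))}) from rfl,
      Set.image_insert_eq, Set.image_insert_eq, Set.image_singleton]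
    have va : G ((0:ℝ),(0:ℝ)) = ![(0:ℝ),0] := by funext i; fin_cases i <;> rfl
    have vb : G ((1:ℝ),(0:ℝ)) = ![(1:ℝ),0] := by funext i; fin_cases i <;> rfl
    have vc : G ((0:ℝ),(1:ℝ)) = ![(0:ℝ),1] := by funext i; fin_cases i <;> rfl
    rw [va, vb, vc]
  have hpf : ∀ q : Fin 2 → ℝ, x 0 + Lmap x q = Lmap x (q -ᵥ 0) +ᵥ (x 0 + Lmap x 0) := by
    intro q; simp [vsub_eq_sub, vadd_eq_add]; abel
  set F := AffineMap.mk' (fun z : Fin 2 → ℝ => x 0 + Lmap x z) (Lmap x) 0 hpf with hF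
  have haffPhi : (fun z : Fin 2 → ℝ => x 0 + Lmap x z) = ⇑F := rfl
  rw [hSE, haffPhi, AffineMap.image_convexHull]
  unfold Tset
  congr 1
  have f0 : F ![(0:ℝ),0] = x 0 := by
    show x 0 + Lmap x ![(0:ℝ),0] = x 0
    rw [Lmap_apply]; funext i; fin_cases i <;> simp
  have f1 : F ![(1:ℝ),0] = x 1 := by
    show x 0 + Lmap x ![(1:ℝ),0] = x 1
    rw [Lmap_apply]; funext i; fin_cases i <;> simp
  have f2 : F ![(0:ℝ),1] = x 2 := by
    show x 0 + Lmap x ![(0:ℝ),1] = x 2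
    rw [Lmap_apply]; funext i; fin_cases i <;> simp
  rw [show ({![(0:ℝ),0], ![1,0], ![0,1]} : Set (Fin 2 → ℝ)) =
    insert ![(0:ℝ),0] (insert ![(1:ℝ),0] {![(0:ℝ),1]}) from rfl,
    Set.image_insert_eq, Set.image_insert_eq, Set.image_singleton, f0, f1, f2]

/-- Change of variables from the triangle to the reference triangle. -/
lemma cv (x : Fin 3 → Fin 2 → ℝ) (hD : Ddet x ≠ 0) (h : (Fin 2 → ℝ) → ℝ) :
    ∫ y in Tset x, h y = ∫ p in Sp, |Ddet x| * h (Phi x p) := by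
  have hder : ∀ z ∈ SE, HasFDerivWithinAt (fun z : Fin 2 → ℝ => x 0 + Lmap x z)
      ((Lmap x).toContinuousLinearMap) SE z := by
    intro z _
    exact (((Lmap x).toContinuousLinearMap.hasFDerivAt (x := z)).const_add
      (x 0)).hasFDerivWithinAt
  have hcv := MeasureTheory.integral_image_eq_integral_abs_det_fderiv_smul volume
    measurableSet_SE hder ((injOn_Phi x hD).injOn) h
  rw [image_Phi x] at hcv
  rw [hcv]
  have hdet : ((Lmap x).toContinuousLinearMap : (Fin 2 → ℝ) →L[ℝ] (Fin 2 → ℝ)).det = Ddet x := by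
    rw [ContinuousLinearMap.det]
    simp only [LinearMap.coe_toContinuousLinearMap]
    exact det_Lmap x
  -- transfer the set integral over SE to Sp via finTwoArrow
  have hmp : MeasurePreserving (MeasurableEquiv.finTwoArrow : (Fin 2 → ℝ) ≃ᵐ ℝ × ℝ)
      (volume : Measure (Fin 2 → ℝ)) volume := volume_preserving_finTwoArrow ℝ
  have htrans := hmp.setIntegral_preimage_emb
    (MeasurableEquiv.finTwoArrow : (Fin 2 → ℝ) ≃ᵐ ℝ × ℝ).measurableEmbedding
    (fun p : ℝ × ℝ => |Ddet x| * h (Phi x p)) Sp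
  have hSE : (MeasurableEquiv.finTwoArrow : (Fin 2 → ℝ) ≃ᵐ ℝ × ℝ) ⁻¹' Sp = SE := rfl
  rw [hSE] at htrans
  rw [← htrans]
  apply setIntegral_congr_fun measurableSet_SE
  intro z _
  simp only [hdet, smul_eq_mul]
  congr 1
  rw [Phi_eq]
  rfl


/-- sign of the orientation -/
def eps (x : Fin 3 → Fin 2 → ℝ) : ℝ := if 0 < Ddet x then 1 else -1

lemma eps_mul_D (x : Fin 3 → Fin 2 → ℝ) (hD : Ddet x ≠ 0) : |Ddet x| = eps x * Ddet x := by
  unfold eps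
  rcases lt_or_gt_of_ne hD with h | h
  · rw [if_neg (by linarith), abs_of_neg h]; ring
  · rw [if_pos h, abs_of_pos h]; ring

lemma cross_eq_D (x : Fin 3 → Fin 2 → ℝ) (i : Fin 3) :
    (x (i + 2) - x (i + 1)) 1 * (x (i + 1) - x i) 0 -
      (x (i + 2) - x (i + 1)) 0 * (x (i + 1) - x i) 1 = Ddet x := by
  have h3 : i = 0 ∨ i = 1 ∨ i = 2 := by fin_cases i <;> simp
  rcases h3 with rfl | rfl | rfl <;>
    simp only [Pi.sub_apply, Ddet, show ((0:Fin 3)+1) = 1 from rfl, show ((0:Fin 3)+2) = 2 from rfl,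
      show ((1:Fin 3)+1) = 2 from rfl, show ((1:Fin 3)+2) = 0 from rfl,
      show ((2:Fin 3)+1) = 0 from rfl, show ((2:Fin 3)+2) = 1 from rfl] <;> ring

lemma edge_ne (x : Fin 3 → Fin 2 → ℝ) (hx : AffineIndependent ℝ x) (i : Fin 3) :
    x (i + 2) ≠ x (i + 1) := by
  intro h
  have hne : i + 2 ≠ i + 1 := by fin_cases i <;> decide
  exact hne (hx.injective h)

lemma normal_formula (x n : Fin 3 → Fin 2 → ℝ) (hx : AffineIndependent ℝ x)
    (hn : IsOuterNormal x n) (i : Fin 3) :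
    enorm2 (x (i + 2) - x (i + 1)) * n i 0 = eps x * (x (i + 2) - x (i + 1)) 1 ∧
    enorm2 (x (i + 2) - x (i + 1)) * n i 1 = -(eps x * (x (i + 2) - x (i + 1)) 0) := by
  obtain ⟨hunit, horth, hout⟩ := hn i
  set t : Fin 2 → ℝ := x (i + 2) - x (i + 1) with ht
  set w : Fin 2 → ℝ := x (i + 1) - x i with hw
  have hD := Ddet_ne_zero x hx
  have htne : t ≠ 0 := by
    rw [ht, sub_ne_zero]
    exact edge_ne x hx i
  have hq : 0 < t ⬝ᵥ t := by
    have hor : t 0 ≠ 0 ∨ t 1 ≠ 0 := by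
      by_contra hc
      push_neg at hc
      apply htne
      funext j
      fin_cases j <;> simp_all
    simp only [dotProduct, Fin.sum_univ_two]
    rcases hor with h | h
    · nlinarith [mul_self_pos.mpr h, mul_self_nonneg (t 1)]
    · nlinarith [mul_self_pos.mpr h, mul_self_nonneg (t 0)]
  have hqd : t ⬝ᵥ t = t 0 * t 0 + t 1 * t 1 := by simp [dotProduct, Fin.sum_univ_two]
  have horth' : n i 0 * t 0 + n i 1 * t 1 = 0 := by
    simpa [dotProduct, Fin.sum_univ_two] using horth
  have hunit' : n i 0 * n i 0 + n i 1 * n i 1 = 1 := by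
    simpa [dotProduct, Fin.sum_univ_two] using hunit
  set lam : ℝ := (n i 0 * t 1 - n i 1 * t 0) / (t ⬝ᵥ t) with hlam
  have hn0' : n i 0 * (t ⬝ᵥ t) = (n i 0 * t 1 - n i 1 * t 0) * t 1 := by
    rw [hqd]; linear_combination (t 0) * horth'
  have hn1' : n i 1 * (t ⬝ᵥ t) = -((n i 0 * t 1 - n i 1 * t 0) * t 0) := by
    rw [hqd]; linear_combination (t 1) * horth'
  have hn0 : n i 0 = lam * t 1 := by
    rw [hlam, div_mul_eq_mul_div, eq_div_iff hq.ne']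
    exact hn0'
  have hn1 : n i 1 = -(lam * t 0) := by
    rw [hlam, div_mul_eq_mul_div, ← neg_div, eq_div_iff hq.ne']
    exact hn1'
  have hA : (n i 0 * t 1 - n i 1 * t 0) ^ 2 = t ⬝ᵥ t := by
    rw [hqd]
    linear_combination (t 0 * t 0 + t 1 * t 1) * hunit' - (n i 0 * t 0 + n i 1 * t 1) * horth'
  have hlamsq : lam ^ 2 * (t ⬝ᵥ t) = 1 := by
    have ha : (t ⬝ᵥ t) ≠ 0 := hq.ne'
    rw [hlam, div_pow, hA, pow_two, div_mul_eq_mul_div]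
    rw [div_eq_one_iff_eq (by exact mul_ne_zero ha ha)]
  have hnorm_sq : enorm2 t ^ 2 = t ⬝ᵥ t := by
    rw [enorm2, Real.sq_sqrt (by positivity)]
  have hnormpos : 0 < enorm2 t := by
    rw [enorm2]
    exact Real.sqrt_pos.mpr hq
  set m : ℝ := enorm2 t * lam with hm
  have hmsq : m ^ 2 = 1 := by
    rw [hm, mul_pow, hnorm_sq]
    linarith [hlamsq]
  have hcross : t 1 * w 0 - t 0 * w 1 = Ddet x := cross_eq_D x i
  have hlamD : 0 < lam * Ddet x := by
    have : n i ⬝ᵥ w = lam * (t 1 * w 0 - t 0 * w 1) := by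
      simp only [dotProduct, Fin.sum_univ_two, hn0, hn1]
      ring
    rw [this, hcross] at hout
    exact hout
  have hmeps : m = eps x := by
    unfold eps
    rcases lt_or_gt_of_ne hD with h | h
    · rw [if_neg (by linarith)]
      have hlamneg : lam < 0 := by
        by_contra h'
        push_neg at h'
        nlinarith [mul_nonpos_of_nonneg_of_nonpos h' h.le]
      have hmneg : m < 0 := by
        rw [hm]; exact mul_neg_of_pos_of_neg hnormpos hlamneg
      have hfac : (m + 1) * (m - 1) = 0 := by linear_combination hmsq
      rcases mul_eq_zero.mp hfac with h' | h'
      · linarith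
      · linarith
    · rw [if_pos h]
      have hlampos : 0 < lam := by
        by_contra h'
        push_neg at h'
        nlinarith [mul_nonpos_of_nonpos_of_nonneg h' h.le]
      have hmpos : 0 < m := mul_pos hnormpos hlampos
      have hfac : (m + 1) * (m - 1) = 0 := by linear_combination hmsq
      rcases mul_eq_zero.mp hfac with h' | h'
      · linarith
      · linarith
  constructor
  · rw [hn0, show enorm2 t * (lam * t 1) = m * t 1 by rw [hm]; ring, hmeps]
  · rw [hn1, show enorm2 t * -(lam * t 0) = -(m * t 0) by rw [hm]; ring, hmeps]

lemma edgePt_cont (x : Fin 3 → Fin 2 → ℝ) (i : Fin 3) :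
    Continuous fun s : ℝ => edgePt x i s := by
  unfold edgePt
  exact ((continuous_const.sub continuous_id).smul continuous_const).add
    (continuous_id.smul continuous_const)

lemma divergence_triangle (x n : Fin 3 → Fin 2 → ℝ) (hx : AffineIndependent ℝ x)
    (hn : IsOuterNormal x n) (u : (Fin 2 → ℝ) → Fin 2 → ℝ)
    (hu : ∀ k : Fin 2, ContDiff ℝ 1 fun y => u y k) :
    ∑ i : Fin 3, enorm2 (x (i+2) - x (i+1)) * ∫ s in (0:ℝ)..1, u (edgePt x i s) ⬝ᵥ n i
      = ∫ y in Tset x, ∑ k : Fin 2, fderiv ℝ (fun z => u z k) y (Pi.single k (1:ℝ)) := by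
  classical
  have hD := Ddet_ne_zero x hx
  set d1 : Fin 2 → ℝ := x 1 - x 0 with hd1
  set d2 : Fin 2 → ℝ := x 2 - x 0 with hd2
  set I : Fin 3 → Fin 2 → ℝ := fun i k => ∫ s in (0:ℝ)..1, u (edgePt x i s) k with hIdef
  have hPhiCont : Continuous (Phi x) := by
    unfold Phi
    exact (continuous_const.add (continuous_fst.smul continuous_const)).add
      (continuous_snd.smul continuous_const)
  have hucont : ∀ k : Fin 2, Continuous fun y => u y k := fun k => (hu k).continuous
  have hfdcont : ∀ (k : Fin 2) (v : Fin 2 → ℝ),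
      Continuous fun y => fderiv ℝ (fun z => u z k) y v := fun k v =>
    Continuous.clm_apply ((hu k).continuous_fderiv one_ne_zero) continuous_const
  -- curves
  have hcurve1 : ∀ (k : Fin 2) (p : ℝ × ℝ),
      HasDerivAt (fun s => u (Phi x (s, p.2)) k)
        (fderiv ℝ (fun z => u z k) (Phi x p) d1) p.1 := by
    intro k p
    have hc : HasDerivAt (fun s : ℝ => Phi x (s, p.2)) d1 p.1 := by
      have h1 : HasDerivAt (fun s : ℝ => x 0 + s • d1 + p.2 • d2) ((1:ℝ) • d1) p.1 :=
        (((hasDerivAt_id p.1).smul_const d1).const_add (x 0)).add_const (p.2 • d2)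
      rw [one_smul] at h1
      exact h1
    exact (((hu k).differentiable one_ne_zero _).hasFDerivAt).comp_hasDerivAt p.1 hc
  have hcurve2 : ∀ (k : Fin 2) (p : ℝ × ℝ),
      HasDerivAt (fun t => u (Phi x (p.1, t)) k)
        (fderiv ℝ (fun z => u z k) (Phi x p) d2) p.2 := by
    intro k p
    have hc : HasDerivAt (fun t : ℝ => Phi x (p.1, t)) d2 p.2 := by
      have h1 : HasDerivAt (fun t : ℝ => (x 0 + p.1 • d1) + t • d2) ((1:ℝ) • d2) p.2 :=
        ((hasDerivAt_id p.2).smul_const d2).const_add (x 0 + p.1 • d1)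
      rw [one_smul] at h1
      exact h1
    exact (((hu k).differentiable one_ne_zero _).hasFDerivAt).comp_hasDerivAt p.2 hc
  -- edge identifications
  have hedgeA : ∀ s : ℝ, Phi x (1 - s, s) = edgePt x 0 s := by
    intro s
    unfold Phi edgePt
    simp only [show ((0:Fin 3)+1) = 1 from rfl, show ((0:Fin 3)+2) = 2 from rfl]
    module
  have hedgeB : ∀ t : ℝ, Phi x ((0:ℝ), t) = edgePt x 1 (1 - t) := by
    intro t
    unfold Phi edgePt
    simp only [show ((1:Fin 3)+1) = 2 from rfl, show ((1:Fin 3)+2) = 0 from rfl]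
    module
  have hedgeC : ∀ s : ℝ, Phi x (s, 1 - s) = edgePt x 0 (1 - s) := by
    intro s
    unfold Phi edgePt
    simp only [show ((0:Fin 3)+1) = 1 from rfl, show ((0:Fin 3)+2) = 2 from rfl]
    module
  have hedgeD : ∀ s : ℝ, Phi x (s, (0:ℝ)) = edgePt x 2 s := by
    intro s
    unfold Phi edgePt
    simp only [show ((2:Fin 3)+1) = 0 from rfl, show ((2:Fin 3)+2) = 1 from rfl]
    module
  have hrefl : ∀ (i : Fin 3) (k : Fin 2),
      (∫ s in (0:ℝ)..1, u (edgePt x i (1 - s)) k) = I i k := by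
    intro i k
    have := intervalIntegral.integral_comp_sub_left (a := (0:ℝ)) (b := 1)
      (fun s => u (edgePt x i s) k) 1
    norm_num at this
    rw [this]
  -- reference integrals
  have hJ1 : ∀ k : Fin 2,
      (∫ p in Sp, fderiv ℝ (fun z => u z k) (Phi x p) d1) = I 0 k - I 1 k := by
    intro k
    have h := refFTC1 (fun p => u (Phi x p) k) (fun p => fderiv ℝ (fun z => u z k) (Phi x p) d1)
      ((hucont k).comp hPhiCont) (((hfdcont k d1).comp hPhiCont)) (fun p => hcurve1 k p)
    rw [h]
    congr 1
    · apply intervalIntegral.integral_congr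
      intro s _
      show u (Phi x (1 - s, s)) k = u (edgePt x 0 s) k
      rw [hedgeA s]
    · rw [show (fun s : ℝ => u (Phi x ((0:ℝ), s)) k) = fun s => u (edgePt x 1 (1 - s)) k from
        funext fun s => by rw [hedgeB s]]
      exact hrefl 1 k
  have hJ2 : ∀ k : Fin 2,
      (∫ p in Sp, fderiv ℝ (fun z => u z k) (Phi x p) d2) = I 0 k - I 2 k := by
    intro k
    have h := refFTC2 (fun p => u (Phi x p) k) (fun p => fderiv ℝ (fun z => u z k) (Phi x p) d2)
      ((hucont k).comp hPhiCont) (((hfdcont k d2).comp hPhiCont)) (fun p => hcurve2 k p)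
    rw [h]
    congr 1
    · rw [show (fun s : ℝ => u (Phi x (s, 1 - s)) k) = fun s => u (edgePt x 0 (1 - s)) k from
        funext fun s => by rw [hedgeC s]]
      exact hrefl 0 k
    · apply intervalIntegral.integral_congr
      intro s _
      show u (Phi x (s, (0:ℝ))) k = u (edgePt x 2 s) k
      rw [hedgeD s]
  -- pointwise divergence formula
  have hsingle : ∀ y : Fin 2 → ℝ,
      (∑ k : Fin 2, fderiv ℝ (fun z => u z k) y (Pi.single k (1:ℝ))) =
      (d2 1 * fderiv ℝ (fun z => u z 0) y d1 - d1 1 * fderiv ℝ (fun z => u z 0) y d2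
       - d2 0 * fderiv ℝ (fun z => u z 1) y d1 + d1 0 * fderiv ℝ (fun z => u z 1) y d2)
        / Ddet x := by
    intro y
    have hcombo0 : Ddet x • (Pi.single (0 : Fin 2) (1:ℝ) : Fin 2 → ℝ) = d2 1 • d1 - d1 1 • d2 := by
      funext j
      fin_cases j <;>
        simp [Pi.single_apply, Ddet, hd1, hd2] <;> ring
    have hcombo1 : Ddet x • (Pi.single (1 : Fin 2) (1:ℝ) : Fin 2 → ℝ) = d1 0 • d2 - d2 0 • d1 := by
      funext j
      fin_cases j <;>
        simp [Pi.single_apply, Ddet, hd1, hd2] <;> ring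
    have key : ∀ k : Fin 2, ∀ v : Fin 2 → ℝ, ∀ a b : ℝ, ∀ w1 w2 : Fin 2 → ℝ,
        Ddet x • v = a • w1 - b • w2 →
        fderiv ℝ (fun z => u z k) y v =
          (a * fderiv ℝ (fun z => u z k) y w1 - b * fderiv ℝ (fun z => u z k) y w2) / Ddet x := by
      intro k v a b w1 w2 hv
      set L := fderiv ℝ (fun z => u z k) y with hL
      have : Ddet x * L v = a * L w1 - b * L w2 := by
        have := congrArg L hv
        rw [_root_.map_smul, map_sub, _root_.map_smul, _root_.map_smul] at this
        simpa [smul_eq_mul] using this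
      rw [eq_div_iff hD]
      linarith [this]
    rw [Fin.sum_univ_two]
    rw [key 0 _ (d2 1) (d1 1) d1 d2 hcombo0, key 1 _ (d1 0) (d2 0) d2 d1 hcombo1]
    field_simp
    ring
  -- integrability on Sp
  have hIntOn : ∀ (k : Fin 2) (v : Fin 2 → ℝ),
      IntegrableOn (fun p => fderiv ℝ (fun z => u z k) (Phi x p) v) Sp volume := fun k v =>
    ((hfdcont k v).comp hPhiCont).continuousOn.integrableOn_compact isCompact_Sp
  -- interior integral
  have hint : (∫ y in Tset x, ∑ k : Fin 2, fderiv ℝ (fun z => u z k) y (Pi.single k (1:ℝ)))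
      = eps x * (d2 1 * (I 0 0 - I 1 0) - d1 1 * (I 0 0 - I 2 0)
        - d2 0 * (I 0 1 - I 1 1) + d1 0 * (I 0 1 - I 2 1)) := by
    rw [cv x hD]
    have hptwise : ∀ p : ℝ × ℝ,
        |Ddet x| * (∑ k : Fin 2, fderiv ℝ (fun z => u z k) (Phi x p) (Pi.single k (1:ℝ)))
        = eps x * (d2 1 * fderiv ℝ (fun z => u z 0) (Phi x p) d1
          - d1 1 * fderiv ℝ (fun z => u z 0) (Phi x p) d2
          - d2 0 * fderiv ℝ (fun z => u z 1) (Phi x p) d1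
          + d1 0 * fderiv ℝ (fun z => u z 1) (Phi x p) d2) := by
      intro p
      rw [hsingle (Phi x p), eps_mul_D x hD]
      field_simp
    rw [MeasureTheory.integral_congr_ae (Filter.Eventually.of_forall hptwise)]
    rw [MeasureTheory.integral_const_mul]
    congr 1
    rw [← hJ1 0, ← hJ2 0, ← hJ1 1, ← hJ2 1]
    rw [MeasureTheory.integral_add, MeasureTheory.integral_sub, MeasureTheory.integral_sub]
    · rw [MeasureTheory.integral_const_mul, MeasureTheory.integral_const_mul,
        MeasureTheory.integral_const_mul, MeasureTheory.integral_const_mul]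
    · exact (hIntOn 0 d1).const_mul _
    · exact (hIntOn 0 d2).const_mul _
    · exact ((hIntOn 0 d1).const_mul _).sub ((hIntOn 0 d2).const_mul _)
    · exact (hIntOn 1 d1).const_mul _
    · exact (((hIntOn 0 d1).const_mul _).sub ((hIntOn 0 d2).const_mul _)).sub
        ((hIntOn 1 d1).const_mul _)
    · exact (hIntOn 1 d2).const_mul _
  -- boundary terms
  have hbd : ∀ i : Fin 3,
      enorm2 (x (i+2) - x (i+1)) * ∫ s in (0:ℝ)..1, u (edgePt x i s) ⬝ᵥ n i
      = eps x * (x (i+2) - x (i+1)) 1 * I i 0 - eps x * (x (i+2) - x (i+1)) 0 * I i 1 := by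
    intro i
    obtain ⟨hn0, hn1⟩ := normal_formula x n hx hn i
    rw [← intervalIntegral.integral_const_mul]
    have hpt : ∀ s : ℝ, enorm2 (x (i+2) - x (i+1)) * (u (edgePt x i s) ⬝ᵥ n i) =
        (eps x * (x (i+2) - x (i+1)) 1) * u (edgePt x i s) 0
        - (eps x * (x (i+2) - x (i+1)) 0) * u (edgePt x i s) 1 := by
      intro s
      simp only [dotProduct, Fin.sum_univ_two]
      linear_combination (u (edgePt x i s) 0) * hn0 + (u (edgePt x i s) 1) * hn1
    rw [intervalIntegral.integral_congr (fun s _ => hpt s)]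
    have hck : ∀ k : Fin 2, Continuous fun s : ℝ => u (edgePt x i s) k := fun k =>
      (hucont k).comp (edgePt_cont x i)
    rw [intervalIntegral.integral_sub (((hck 0).intervalIntegrable _ _).const_mul _)
      (((hck 1).intervalIntegrable _ _).const_mul _),
      intervalIntegral.integral_const_mul, intervalIntegral.integral_const_mul]
  rw [hint, Fin.sum_univ_three, hbd 0, hbd 1, hbd 2]
  simp only [show ((0:Fin 3)+1) = 1 from rfl, show ((0:Fin 3)+2) = 2 from rfl,
    show ((1:Fin 3)+1) = 2 from rfl, show ((1:Fin 3)+2) = 0 from rfl,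
    show ((2:Fin 3)+1) = 0 from rfl, show ((2:Fin 3)+2) = 1 from rfl,
    Pi.sub_apply, hd1, hd2]
  ring

lemma contDiff_of_poly {f : (Fin 2 → ℝ) → ℝ} (hf : IsPolyDeg2 f) : ContDiff ℝ 1 f := by
  obtain ⟨p, -, hp⟩ := hf
  have : (f = fun y => MvPolynomial.eval y p) := funext hp
  rw [this]
  clear this hp
  induction p using MvPolynomial.induction_on with
  | C a => simpa using contDiff_const
  | add p q hp hq => simpa [MvPolynomial.eval_add] using hp.add hq
  | mul_X p i hp =>
      simp only [MvPolynomial.eval_mul, MvPolynomial.eval_X]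
      exact hp.mul (contDiff_pi.mp contDiff_id i)

end AW

/-- If `σ ∈ X_T` has the same degrees of freedom as a C¹ symmetric tensor field `τ`,
then `σ` conserves the linear moments of the normal traces on the boundary:
`Σᵢ ∫_{eᵢ} (σ nᵢ)·v ds = Σᵢ ∫_{eᵢ} (τ nᵢ)·v ds` for every affine `v : ℝ² → ℝ²`, where
`∫_{eᵢ} f ds = |eᵢ| ∫₀¹ f(γᵢ(s)) ds`. -/
theorem interpolation_conserves_normal_moments
    (x n : Fin 3 → Fin 2 → ℝ)
    (hx : AffineIndependent ℝ x)
    (hn : IsOuterNormal x n)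
    (τ : (Fin 2 → ℝ) → Matrix (Fin 2) (Fin 2) ℝ)
    (hτsym : ∀ y, (τ y)ᵀ = τ y)
    (hτreg : ∀ k l : Fin 2, ContDiff ℝ 1 fun y => τ y k l)
    (σ : (Fin 2 → ℝ) → Matrix (Fin 2) (Fin 2) ℝ)
    (hσ : MemXT x n σ)
    (hdof1 : ∀ i : Fin 3, ∀ aq bq : ℝ,
      (∫ s in (0:ℝ)..1, (n i ⬝ᵥ (σ (edgePt x i s)).mulVec (n i)) * (aq * s + bq)) =
      ∫ s in (0:ℝ)..1, (n i ⬝ᵥ (τ (edgePt x i s)).mulVec (n i)) * (aq * s + bq))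
    (hdof2 : ∀ k l : Fin 2, (∫ y in Tset x, σ y k l) = ∫ y in Tset x, τ y k l)
    (hdof3 : ∀ (A : Matrix (Fin 2) (Fin 2) ℝ) (b : Fin 2 → ℝ),
      (∫ y in Tset x, matDiv σ y ⬝ᵥ (A.mulVec y + b)) =
      ∫ y in Tset x, matDiv τ y ⬝ᵥ (A.mulVec y + b)) :
    ∀ (A : Matrix (Fin 2) (Fin 2) ℝ) (b : Fin 2 → ℝ),
      (∑ i : Fin 3, enorm2 (x (i + 2) - x (i + 1)) *
        ∫ s in (0:ℝ)..1, (σ (edgePt x i s)).mulVec (n i) ⬝ᵥ (A.mulVec (edgePt x i s) + b)) =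
      ∑ i : Fin 3, enorm2 (x (i + 2) - x (i + 1)) *
        ∫ s in (0:ℝ)..1, (τ (edgePt x i s)).mulVec (n i) ⬝ᵥ (A.mulVec (edgePt x i s) + b) := by
  intro A b
  classical
  obtain ⟨hσsym, hσpoly, -⟩ := hσ
  have hσreg : ∀ k l : Fin 2, ContDiff ℝ 1 fun y => σ y k l := fun k l =>
    AW.contDiff_of_poly (hσpoly k l)
  set v : (Fin 2 → ℝ) → Fin 2 → ℝ := fun y => A.mulVec y + b with hv
  set u : (Fin 2 → ℝ) → Fin 2 → ℝ := fun y => (σ y - τ y).mulVec (v y) with hu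
  have hufun : ∀ k : Fin 2, (fun z => u z k) =
      fun z => (σ z k 0 - τ z k 0) * v z 0 + (σ z k 1 - τ z k 1) * v z 1 := by
    intro k
    funext z
    simp [hu, Matrix.mulVec, dotProduct, Fin.sum_univ_two, Matrix.sub_apply]
    fin_cases k <;> rfl
  have hvfun : ∀ j : Fin 2, (fun z : Fin 2 → ℝ => v z j) =
      fun z => A j 0 * z 0 + A j 1 * z 1 + b j := by
    intro j
    funext z
    simp [hv, Matrix.mulVec, dotProduct, Fin.sum_univ_two]
    fin_cases j <;> rfl
  have hvdiff : ∀ j : Fin 2, ContDiff ℝ 1 fun z : Fin 2 → ℝ => v z j := by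
    intro j
    rw [hvfun j]
    exact ((contDiff_const.mul (contDiff_pi.mp contDiff_id 0)).add
      (contDiff_const.mul (contDiff_pi.mp contDiff_id 1))).add contDiff_const
  have hucd : ∀ k : Fin 2, ContDiff ℝ 1 fun z => u z k := by
    intro k
    rw [hufun k]
    exact (((hσreg k 0).sub (hτreg k 0)).mul (hvdiff 0)).add
      (((hσreg k 1).sub (hτreg k 1)).mul (hvdiff 1))
  have hσs : (fun z => σ z 1 0) = (fun z => σ z 0 1) := by
    funext z
    calc σ z 1 0 = (σ z)ᵀ 0 1 := rfl
      _ = σ z 0 1 := by rw [hσsym z]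
  have hτs : (fun z => τ z 1 0) = (fun z => τ z 0 1) := by
    funext z
    calc τ z 1 0 = (τ z)ᵀ 0 1 := rfl
      _ = τ z 0 1 := by rw [hτsym z]
  -- derivative of affine v
  have hvfd : ∀ (j m : Fin 2) (y : Fin 2 → ℝ),
      fderiv ℝ (fun z : Fin 2 → ℝ => v z j) y (Pi.single m (1:ℝ)) = A j m := by
    intro j m y
    rw [hvfun j]
    have h0 : HasFDerivAt (fun z : Fin 2 → ℝ => A j 0 * z 0 + A j 1 * z 1 + b j)
        (A j 0 • (ContinuousLinearMap.proj (R := ℝ) (φ := fun _ : Fin 2 => ℝ) 0)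
          + A j 1 • (ContinuousLinearMap.proj (R := ℝ) (φ := fun _ : Fin 2 => ℝ) 1)) y := by
      apply HasFDerivAt.add_const
      exact ((ContinuousLinearMap.proj (R := ℝ) (φ := fun _ : Fin 2 => ℝ) 0).hasFDerivAt.const_mul
        (A j 0)).add
        ((ContinuousLinearMap.proj (R := ℝ) (φ := fun _ : Fin 2 => ℝ) 1).hasFDerivAt.const_mul
          (A j 1))
    rw [h0.fderiv]
    fin_cases m <;>
      simp [Pi.single_apply]
  -- pointwise divergence computation
  have hterm : ∀ (k m : Fin 2) (y : Fin 2 → ℝ),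
      fderiv ℝ (fun z => u z k) y (Pi.single m (1:ℝ)) =
      v y 0 * (fderiv ℝ (fun z => σ z k 0) y (Pi.single m (1:ℝ))
          - fderiv ℝ (fun z => τ z k 0) y (Pi.single m (1:ℝ)))
        + (σ y k 0 - τ y k 0) * A 0 m
        + v y 1 * (fderiv ℝ (fun z => σ z k 1) y (Pi.single m (1:ℝ))
          - fderiv ℝ (fun z => τ z k 1) y (Pi.single m (1:ℝ)))
        + (σ y k 1 - τ y k 1) * A 1 m := by
    intro k m y
    have ha0 : HasFDerivAt (fun z => σ z k 0 - τ z k 0)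
        (fderiv ℝ (fun z => σ z k 0) y - fderiv ℝ (fun z => τ z k 0) y) y :=
      ((((hσreg k 0).differentiable one_ne_zero) y).hasFDerivAt).sub
        ((((hτreg k 0).differentiable one_ne_zero) y).hasFDerivAt)
    have ha1 : HasFDerivAt (fun z => σ z k 1 - τ z k 1)
        (fderiv ℝ (fun z => σ z k 1) y - fderiv ℝ (fun z => τ z k 1) y) y :=
      ((((hσreg k 1).differentiable one_ne_zero) y).hasFDerivAt).sub
        ((((hτreg k 1).differentiable one_ne_zero) y).hasFDerivAt)
    have hb0 : HasFDerivAt (fun z : Fin 2 → ℝ => v z 0) (fderiv ℝ (fun z => v z 0) y) y :=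
      (((hvdiff 0).differentiable one_ne_zero) y).hasFDerivAt
    have hb1 : HasFDerivAt (fun z : Fin 2 → ℝ => v z 1) (fderiv ℝ (fun z => v z 1) y) y :=
      (((hvdiff 1).differentiable one_ne_zero) y).hasFDerivAt
    have H : HasFDerivAt (fun z => (σ z k 0 - τ z k 0) * v z 0 + (σ z k 1 - τ z k 1) * v z 1) _ y :=
      (ha0.mul hb0).add (ha1.mul hb1)
    rw [hufun k, H.fderiv]
    simp only [ContinuousLinearMap.add_apply, ContinuousLinearMap.smul_apply,
      ContinuousLinearMap.sub_apply, smul_eq_mul, hvfd]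
    ring
  have hdivu : ∀ y : Fin 2 → ℝ,
      (∑ k : Fin 2, fderiv ℝ (fun z => u z k) y (Pi.single k (1:ℝ))) =
      (matDiv σ y ⬝ᵥ v y - matDiv τ y ⬝ᵥ v y) +
      ((σ y 0 0 - τ y 0 0) * A 0 0 + (σ y 0 1 - τ y 0 1) * A 1 0 +
       (σ y 1 0 - τ y 1 0) * A 0 1 + (σ y 1 1 - τ y 1 1) * A 1 1) := by
    intro y
    rw [Fin.sum_univ_two, hterm 0 0 y, hterm 1 1 y]
    simp only [matDiv, dotProduct, Fin.sum_univ_two]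
    rw [hσs, hτs]
    ring
  -- measurability and integrability on T
  have hTcompact : IsCompact (Tset x) := by
    apply Set.Finite.isCompact_convexHull
    exact (Set.finite_singleton _).insert _ |>.insert _
  have hTmeas : MeasurableSet (Tset x) := hTcompact.isClosed.measurableSet
  have hσc : ∀ k l : Fin 2, Continuous fun y => σ y k l := fun k l => (hσreg k l).continuous
  have hτc : ∀ k l : Fin 2, Continuous fun y => τ y k l := fun k l => (hτreg k l).continuous
  have hvc : ∀ j : Fin 2, Continuous fun y : Fin 2 → ℝ => v y j := fun j =>
    (hvdiff j).continuous
  have hmdc : ∀ (ρ : (Fin 2 → ℝ) → Matrix (Fin 2) (Fin 2) ℝ),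
      (∀ k l : Fin 2, ContDiff ℝ 1 fun y => ρ y k l) →
      Continuous fun y => matDiv ρ y ⬝ᵥ v y := by
    intro ρ hρ
    have h : ∀ k j : Fin 2, Continuous fun y =>
        fderiv ℝ (fun z => ρ z k j) y (Pi.single j (1:ℝ)) := fun k j =>
      Continuous.clm_apply ((hρ k j).continuous_fderiv one_ne_zero) continuous_const
    simp only [matDiv, dotProduct, Fin.sum_univ_two]
    exact (((h 0 0).add (h 0 1)).mul (hvc 0)).add (((h 1 0).add (h 1 1)).mul (hvc 1))
  -- the interior integral vanishes
  have hintzero :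
      (∫ y in Tset x, ∑ k : Fin 2, fderiv ℝ (fun z => u z k) y (Pi.single k (1:ℝ))) = 0 := by
    rw [MeasureTheory.integral_congr_ae (Filter.Eventually.of_forall fun y => hdivu y)]
    have hI1 : IntegrableOn (fun y => matDiv σ y ⬝ᵥ v y - matDiv τ y ⬝ᵥ v y) (Tset x) volume :=
      (((hmdc σ hσreg).sub (hmdc τ hτreg)).continuousOn).integrableOn_compact hTcompact
    have hent : ∀ k l : Fin 2,
        IntegrableOn (fun y => (σ y k l - τ y k l) * A l k) (Tset x) volume := fun k l =>
      ((((hσc k l).sub (hτc k l)).mul continuous_const).continuousOn).integrableOn_compact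
        hTcompact
    have hI2 : IntegrableOn (fun y => (σ y 0 0 - τ y 0 0) * A 0 0 + (σ y 0 1 - τ y 0 1) * A 1 0 +
        (σ y 1 0 - τ y 1 0) * A 0 1 + (σ y 1 1 - τ y 1 1) * A 1 1) (Tset x) volume :=
      (((hent 0 0).add (hent 0 1)).add (hent 1 0)).add (hent 1 1)
    rw [MeasureTheory.integral_add hI1 hI2]
    have e1 : (∫ y in Tset x, (matDiv σ y ⬝ᵥ v y - matDiv τ y ⬝ᵥ v y)) = 0 := by
      rw [MeasureTheory.integral_sub
        (((hmdc σ hσreg).continuousOn).integrableOn_compact hTcompact)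
        (((hmdc τ hτreg).continuousOn).integrableOn_compact hTcompact)]
      rw [hdof3 A b, sub_self]
    have hone : ∀ k l : Fin 2, (∫ y in Tset x, (σ y k l - τ y k l) * A l k) = 0 := by
      intro k l
      rw [MeasureTheory.integral_mul_const]
      rw [MeasureTheory.integral_sub
        (((hσc k l).continuousOn).integrableOn_compact hTcompact)
        (((hτc k l).continuousOn).integrableOn_compact hTcompact)]
      rw [hdof2 k l, sub_self, zero_mul]
    have e2 : (∫ y in Tset x, ((σ y 0 0 - τ y 0 0) * A 0 0 + (σ y 0 1 - τ y 0 1) * A 1 0 +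
        (σ y 1 0 - τ y 1 0) * A 0 1 + (σ y 1 1 - τ y 1 1) * A 1 1)) = 0 := by
      have h12 : IntegrableOn (fun y => (σ y 0 0 - τ y 0 0) * A 0 0 +
          (σ y 0 1 - τ y 0 1) * A 1 0) (Tset x) volume := (hent 0 0).add (hent 0 1)
      have h123 : IntegrableOn (fun y => (σ y 0 0 - τ y 0 0) * A 0 0 +
          (σ y 0 1 - τ y 0 1) * A 1 0 + (σ y 1 0 - τ y 1 0) * A 0 1) (Tset x) volume :=
        h12.add (hent 1 0)
      rw [MeasureTheory.integral_add h123 (hent 1 1),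
        MeasureTheory.integral_add h12 (hent 1 0),
        MeasureTheory.integral_add (hent 0 0) (hent 0 1),
        hone 0 0, hone 0 1, hone 1 0, hone 1 1]
      norm_num
    rw [e1, e2, add_zero]
  -- boundary pointwise identity
  have hbpt : ∀ (i : Fin 3) (s : ℝ),
      (σ (edgePt x i s)).mulVec (n i) ⬝ᵥ v (edgePt x i s) =
      (τ (edgePt x i s)).mulVec (n i) ⬝ᵥ v (edgePt x i s) + u (edgePt x i s) ⬝ᵥ n i := by
    intro i s
    have h1 : σ (edgePt x i s) 1 0 = σ (edgePt x i s) 0 1 := congrFun hσs (edgePt x i s)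
    have h2 : τ (edgePt x i s) 1 0 = τ (edgePt x i s) 0 1 := congrFun hτs (edgePt x i s)
    simp only [hu, Matrix.mulVec, dotProduct, Fin.sum_univ_two, Matrix.sub_apply]
    rw [h1, h2]
    ring
  -- continuity in s of the integrands
  have hedgec : ∀ (i : Fin 3) (f : (Fin 2 → ℝ) → ℝ), Continuous f →
      Continuous fun s : ℝ => f (edgePt x i s) := fun i f hf => hf.comp (AW.edgePt_cont x i)
  have hτint : ∀ i : Fin 3, IntervalIntegrable
      (fun s => (τ (edgePt x i s)).mulVec (n i) ⬝ᵥ v (edgePt x i s)) volume 0 1 := by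
    intro i
    apply Continuous.intervalIntegrable
    have hg : Continuous fun y : Fin 2 → ℝ => (τ y).mulVec (n i) ⬝ᵥ v y := by
      simp only [Matrix.mulVec, dotProduct, Fin.sum_univ_two]
      exact ((((hτc 0 0).mul continuous_const).add ((hτc 0 1).mul continuous_const)).mul
        (hvc 0)).add ((((hτc 1 0).mul continuous_const).add
        ((hτc 1 1).mul continuous_const)).mul (hvc 1))
    exact hedgec i _ hg
  have huint : ∀ i : Fin 3, IntervalIntegrable
      (fun s => u (edgePt x i s) ⬝ᵥ n i) volume 0 1 := by
    intro i
    apply Continuous.intervalIntegrable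
    have hg : Continuous fun y : Fin 2 → ℝ => u y ⬝ᵥ n i := by
      simp only [dotProduct, Fin.sum_univ_two]
      exact (((hucd 0).continuous).mul continuous_const).add
        (((hucd 1).continuous).mul continuous_const)
    exact hedgec i _ hg
  have hsplit : ∀ i : Fin 3,
      (∫ s in (0:ℝ)..1, (σ (edgePt x i s)).mulVec (n i) ⬝ᵥ v (edgePt x i s)) =
      (∫ s in (0:ℝ)..1, (τ (edgePt x i s)).mulVec (n i) ⬝ᵥ v (edgePt x i s)) +
      ∫ s in (0:ℝ)..1, u (edgePt x i s) ⬝ᵥ n i := by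
    intro i
    rw [← intervalIntegral.integral_add (hτint i) (huint i)]
    apply intervalIntegral.integral_congr
    intro s _
    exact hbpt i s
  have hdivthm := AW.divergence_triangle x n hx hn u hucd
  calc ∑ i : Fin 3, enorm2 (x (i + 2) - x (i + 1)) *
        ∫ s in (0:ℝ)..1, (σ (edgePt x i s)).mulVec (n i) ⬝ᵥ v (edgePt x i s)
      = ∑ i : Fin 3, (enorm2 (x (i + 2) - x (i + 1)) *
          (∫ s in (0:ℝ)..1, (τ (edgePt x i s)).mulVec (n i) ⬝ᵥ v (edgePt x i s)) +
        enorm2 (x (i + 2) - x (i + 1)) * ∫ s in (0:ℝ)..1, u (edgePt x i s) ⬝ᵥ n i) := by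
        apply Finset.sum_congr rfl
        intro i _
        rw [hsplit i]
        ring
    _ = (∑ i : Fin 3, enorm2 (x (i + 2) - x (i + 1)) *
          ∫ s in (0:ℝ)..1, (τ (edgePt x i s)).mulVec (n i) ⬝ᵥ v (edgePt x i s)) +
        ∑ i : Fin 3, enorm2 (x (i + 2) - x (i + 1)) *
          ∫ s in (0:ℝ)..1, u (edgePt x i s) ⬝ᵥ n i := Finset.sum_add_distrib
    _ = ∑ i : Fin 3, enorm2 (x (i + 2) - x (i + 1)) *
          ∫ s in (0:ℝ)..1, (τ (edgePt x i s)).mulVec (n i) ⬝ᵥ v (edgePt x i s) := by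
        rw [hdivthm, hintzero, add_zero]
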